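/- Let ξ be a regular uncountable cardinal and suppose 𝔭 ≥ ξ (the pseudo-intersection number is at least ξ). Then there is an embedding F from the tree (ξ^{<ξ}, ⊊) into ([ω]^{ℵ₀}, ⊋*) preserving the strict order and incompatibility: if s ⊊ t then F(t) ⊊* F(s) (i.e., F(t) ⊆* F(s) and not F(s) ⊆* F(t)), and if s, t are incomparable in ξ^{<ξ} then F(s) ∩ F(t) is finite. -/

import Mathlib

open Cardinal

/-- `a ⊆* b`: `a` is almost contained in `b`. -/
def AlmostSub (a b : Set ℕ) : Prop := (a \ b).Finite

/-- The pseudo-intersection number 𝔭: the least size of a family of subsets of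
ω with the strong finite intersection property (a base of a free filter) and no
infinite pseudo-intersection. -/
noncomputable def pNum : Cardinal :=
  sInf {c | ∃ B : Set (Set ℕ), #B = c ∧
    (∀ s : Finset (Set ℕ), ↑s ⊆ B → (⋂ a ∈ s, a).Infinite) ∧
    ¬ ∃ x : Set ℕ, x.Infinite ∧ ∀ a ∈ B, AlmostSub x a}

/-- A sequence of ordinals below ξ of length < ξ (an element of ξ^{<ξ}). -/
structure XSeq (ξ : Cardinal) where
  len : Ordinal
  len_lt : len < ξ.ord
  f : Ordinal → Ordinal
  f_lt : ∀ β < len, f β < ξ.ord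

/-- `s` is an initial segment of `t` (i.e. `s ⊆ t` in the tree ξ^{<ξ}). -/
def seqExt {ξ : Cardinal} (s t : XSeq ξ) : Prop :=
  s.len ≤ t.len ∧ ∀ β < s.len, t.f β = s.f β

namespace Stmt17

lemma almostSub_of_subset {a b : Set ℕ} (h : a ⊆ b) : AlmostSub a b := by
  simp [AlmostSub, Set.diff_eq_empty.mpr h]

lemma almostSub_trans {a b c : Set ℕ} (h1 : AlmostSub a b) (h2 : AlmostSub b c) :
    AlmostSub a c := by
  have : a \ c ⊆ (a \ b) ∪ (b \ c) := by
    intro n hn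
    by_cases hb : n ∈ b
    · exact Or.inr ⟨hb, hn.2⟩
    · exact Or.inl ⟨hn.1, hb⟩
  exact (h1.union h2).subset this

lemma not_almostSub {a b : Set ℕ} (h : (a \ b).Infinite) : ¬ AlmostSub a b := h

/-- The branches-of-the-binary-tree almost disjoint family. -/
def Aset (x : ℕ → Bool) : Set ℕ :=
  Set.range fun n => Encodable.encode (List.ofFn fun i : Fin n => x i)

lemma Aset_inj (x : ℕ → Bool) :
    Function.Injective fun n => Encodable.encode (List.ofFn fun i : Fin n => x i) := by
  intro n m h
  have := Encodable.encode_injective h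
  have := congrArg List.length this
  simpa using this

lemma Aset_infinite (x : ℕ → Bool) : (Aset x).Infinite :=
  Set.infinite_range_of_injective (Aset_inj x)

lemma Aset_inter_finite {x y : ℕ → Bool} (hxy : x ≠ y) : (Aset x ∩ Aset y).Finite := by
  obtain ⟨k, hk⟩ : ∃ k, x k ≠ y k := by
    by_contra h
    push_neg at h
    exact hxy (funext h)
  have hsub : Aset x ∩ Aset y ⊆
      (fun n => Encodable.encode (List.ofFn fun i : Fin n => x i)) '' Set.Iic k := by
    rintro m ⟨⟨n, rfl⟩, ⟨n', hn'⟩⟩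
    have hl := Encodable.encode_injective hn'
    have hlen : n' = n := by simpa using congrArg List.length hl
    subst hlen
    refine ⟨n', ?_, rfl⟩
    by_contra hnk
    simp only [Set.mem_Iic, not_le] at hnk
    have hfun := List.ofFn_injective hl
    have := congrFun hfun ⟨k, hnk⟩
    exact hk (by simpa using this.symm)
  exact ((Set.finite_Iic k).image _).subset hsub

lemma Aset_diff_infinite {x y : ℕ → Bool} (hxy : x ≠ y) : (Aset x \ Aset y).Infinite := by
  have h1 : Aset x \ (Aset x ∩ Aset y) ⊆ Aset x \ Aset y := by
    intro n hn
    exact ⟨hn.1, fun h => hn.2 ⟨hn.1, h⟩⟩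
  exact (((Aset_infinite x).diff (Aset_inter_finite hxy)).mono h1)

open Classical in
noncomputable def enumF (a : Set ℕ) : ℕ → ℕ :=
  fun n => if h : a.Infinite then (Set.Infinite.natEmbedding a h n : ℕ) else n

lemma enumF_inj {a : Set ℕ} (h : a.Infinite) : Function.Injective (enumF a) := by
  intro n m hnm
  simp only [enumF, dif_pos h] at hnm
  exact (Set.Infinite.natEmbedding a h).injective (Subtype.ext hnm)

lemma enumF_mem {a : Set ℕ} (h : a.Infinite) (n : ℕ) : enumF a n ∈ a := by
  simp only [enumF, dif_pos h]
  exact (Set.Infinite.natEmbedding a h n).2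

open Classical in
noncomputable def pseudoInt (B : Set (Set ℕ)) : Set ℕ :=
  if h : ∃ x : Set ℕ, x.Infinite ∧ ∀ a ∈ B, AlmostSub x a then h.choose else Set.univ

lemma pseudoInt_spec {B : Set (Set ℕ)}
    (h : ∃ x : Set ℕ, x.Infinite ∧ ∀ a ∈ B, AlmostSub x a) :
    (pseudoInt B).Infinite ∧ ∀ a ∈ B, AlmostSub (pseudoInt B) a := by
  rw [pseudoInt, dif_pos h]
  exact h.choose_spec

variable (A : Ordinal → Set ℕ)

/-- The recursive construction of the tree embedding. -/
noncomputable def G : Ordinal → (Ordinal → Ordinal) → Set ℕ := fun δ =>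
  Ordinal.limitRecOn (motive := fun _ => (Ordinal → Ordinal) → Set ℕ) δ
    (fun _ => Set.univ)
    (fun β ih f => enumF (ih f) '' A (f β))
    (fun δ _ ih f => pseudoInt {a | ∃ β, ∃ h : β < δ, a = ih β h f})

lemma G_zero (f : Ordinal → Ordinal) : G A 0 f = Set.univ := by
  rw [G, Ordinal.limitRecOn_zero]

lemma G_succ (β : Ordinal) (f : Ordinal → Ordinal) :
    G A (Order.succ β) f = enumF (G A β f) '' A (f β) := by
  rw [G, Ordinal.limitRecOn_succ]; rfl

lemma G_limit {δ : Ordinal} (hδ : Order.IsSuccLimit δ) (f : Ordinal → Ordinal) :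
    G A δ f = pseudoInt {a | ∃ β, ∃ _h : β < δ, a = G A β f} := by
  rw [G, Ordinal.limitRecOn_limit _ _ _ _ hδ]
  rfl

lemma G_congr : ∀ δ : Ordinal, ∀ f g : Ordinal → Ordinal,
    (∀ β < δ, f β = g β) → G A δ f = G A δ g := by
  intro δ
  induction δ using Ordinal.induction with
  | h δ IH =>
    intro f g hfg
    rcases Ordinal.zero_or_succ_or_isSuccLimit δ with h0 | ⟨β, rfl⟩ | hlim
    · subst h0; rw [G_zero, G_zero]
    · rw [G_succ, G_succ, IH β (Order.lt_succ β) f g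
        (fun γ hγ => hfg γ (hγ.trans (Order.lt_succ β))),
        hfg β (Order.lt_succ β)]
    · rw [G_limit A hlim, G_limit A hlim]
      have hset : {a | ∃ β, ∃ _h : β < δ, a = G A β f}
          = {a | ∃ β, ∃ _h : β < δ, a = G A β g} := by
        ext a
        constructor
        · rintro ⟨β, hβ, rfl⟩
          exact ⟨β, hβ, IH β hβ f g fun γ hγ => hfg γ (hγ.trans hβ)⟩
        · rintro ⟨β, hβ, rfl⟩
          exact ⟨β, hβ, (IH β hβ f g fun γ hγ => hfg γ (hγ.trans hβ)).symm⟩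
      rw [hset]
lemma G_succ_subset {β : Ordinal} {f : Ordinal → Ordinal}
    (hinf : (G A β f).Infinite) : G A (Order.succ β) f ⊆ G A β f := by
  rw [G_succ]
  rintro _ ⟨n, _, rfl⟩
  exact enumF_mem hinf n

lemma G_inv (hAinf : ∀ α, (A α).Infinite)
    (hA2 : ∀ α, ∃ γ, (A γ \ A α).Infinite)
    (ξ : Cardinal) (hp : ξ ≤ pNum) :
    ∀ δ : Ordinal, δ < ξ.ord → ∀ f, (G A δ f).Infinite ∧
      ∀ β < δ, AlmostSub (G A δ f) (G A β f) ∧ ((G A β f) \ G A δ f).Infinite := by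
  intro δ
  induction δ using Ordinal.induction with
  | h δ IH =>
    intro hδξ f
    rcases Ordinal.zero_or_succ_or_isSuccLimit δ with h0 | ⟨β, rfl⟩ | hlim
    · subst h0
      exact ⟨by rw [G_zero]; exact Set.infinite_univ,
        fun β hβ => absurd hβ (not_lt_of_ge (zero_le (a := β)))⟩
    · -- successor case
      have hβξ : β < ξ.ord := (Order.lt_succ β).trans hδξ
      have hprev := IH β (Order.lt_succ β) hβξ f
      have hinfb : (G A β f).Infinite := hprev.1
      have hXsub : G A (Order.succ β) f ⊆ G A β f := G_succ_subset A hinfb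
      have hXinf : (G A (Order.succ β) f).Infinite := by
        rw [G_succ]
        exact (hAinf (f β)).image ((enumF_inj hinfb).injOn)
      have hdiffinf : (G A β f \ G A (Order.succ β) f).Infinite := by
        obtain ⟨γ, hγ⟩ := hA2 (f β)
        have himg : (enumF (G A β f) '' (A γ \ A (f β))).Infinite :=
          hγ.image ((enumF_inj hinfb).injOn)
        refine himg.mono ?_
        rintro _ ⟨n, hn, rfl⟩
        refine ⟨enumF_mem hinfb n, ?_⟩
        rw [G_succ]
        rintro ⟨n', hn', hee⟩
        exact hn.2 (enumF_inj hinfb hee ▸ hn')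
      refine ⟨hXinf, ?_⟩
      intro γ hγ
      rcases (Order.lt_succ_iff.mp hγ).lt_or_eq with hlt | rfl
      · obtain ⟨hm, hs⟩ := hprev.2 γ hlt
        refine ⟨almostSub_trans (almostSub_of_subset hXsub) hm, ?_⟩
        refine hs.mono ?_
        rintro n ⟨hn1, hn2⟩
        exact ⟨hn1, fun h => hn2 (hXsub h)⟩
      · exact ⟨almostSub_of_subset hXsub, hdiffinf⟩
    · -- limit case
      have hGeq : G A δ f = pseudoInt {a | ∃ β, ∃ _h : β < δ, a = G A β f} :=
        G_limit A hlim f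
      have hmono : ∀ γ β : Ordinal, γ ≤ β → β < δ →
          AlmostSub (G A β f) (G A γ f) := by
        intro γ β hle hlt
        rcases hle.lt_or_eq with h | rfl
        · exact ((IH β hlt (hlt.trans hδξ) f).2 γ h).1
        · exact almostSub_of_subset subset_rfl
      have hex : ∃ x : Set ℕ, x.Infinite ∧
          ∀ a ∈ {a | ∃ β, ∃ _h : β < δ, a = G A β f}, AlmostSub x a := by
        by_contra hno
        have hsfip : ∀ s : Finset (Set ℕ),
            ↑s ⊆ {a | ∃ β, ∃ _h : β < δ, a = G A β f} → (⋂ a ∈ s, a).Infinite := by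
          intro s hs
          rcases s.eq_empty_or_nonempty with rfl | hne
          · simpa using Set.infinite_univ
          · have hch : ∀ a ∈ s, ∃ β, β < δ ∧ a = G A β f := by
              intro a ha
              rcases hs ha with ⟨β, hβ, rfl⟩
              exact ⟨β, hβ, rfl⟩
            choose! σ hσ1 hσ2 using hch
            set B := s.sup' hne σ with hB
            have hBδ : B < δ := by
              rw [hB, Finset.sup'_lt_iff]
              exact hσ1
            have hfinU : (⋃ a ∈ s, (G A B f \ a)).Finite := by
              refine Set.Finite.biUnion s.finite_toSet ?_
              intro a ha
              rw [hσ2 a ha]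
              exact hmono (σ a) B (Finset.le_sup' σ ha) hBδ
            have hBinf : (G A B f).Infinite := (IH B hBδ (hBδ.trans hδξ) f).1
            refine ((hBinf.diff hfinU).mono ?_)
            rintro n ⟨hn1, hn2⟩
            simp only [Set.mem_iUnion, Set.mem_diff, not_exists] at hn2
            simp only [Set.mem_iInter]
            intro a ha
            by_contra hna
            exact hn2 a ha ⟨hn1, hna⟩
        have h1 : pNum ≤ #({a | ∃ β, ∃ _h : β < δ, a = G A β f} : Set (Set ℕ)) :=
          csInf_le' ⟨_, rfl, hsfip, hno⟩
        have hrange : {a | ∃ β, ∃ _h : β < δ, a = G A β f} =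
            Set.range (fun x : δ.ToType =>
              G A ((Ordinal.ToType.mk (o := δ)).symm x).1 f) := by
          ext a
          constructor
          · rintro ⟨β, hβ, rfl⟩
            exact ⟨Ordinal.ToType.mk (o := δ) ⟨β, hβ⟩, by simp⟩
          · rintro ⟨x, rfl⟩
            exact ⟨((Ordinal.ToType.mk (o := δ)).symm x).1,
              ((Ordinal.ToType.mk (o := δ)).symm x).2, rfl⟩
        have h2 : #({a | ∃ β, ∃ _h : β < δ, a = G A β f} : Set (Set ℕ)) ≤ δ.card := by
          rw [hrange, ← Cardinal.mk_toType δ]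
          exact Cardinal.mk_range_le
        have h3 : δ.card < ξ := Cardinal.lt_ord.mp hδξ
        exact absurd ((hp.trans h1).trans h2) (not_le.mpr h3)
      obtain ⟨hxinf, hxsub⟩ := pseudoInt_spec hex
      refine ⟨by rw [hGeq]; exact hxinf, ?_⟩
      intro β hβ
      constructor
      · rw [hGeq]
        exact hxsub _ ⟨β, hβ, rfl⟩
      · have hβ1 : Order.succ β < δ := hlim.succ_lt hβ
        have hd : (G A β f \ G A (Order.succ β) f).Infinite :=
          ((IH (Order.succ β) hβ1 (hβ1.trans hδξ) f).2 β (Order.lt_succ β)).2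
        have hxs : AlmostSub (G A δ f) (G A (Order.succ β) f) := by
          rw [hGeq]
          exact hxsub _ ⟨_, hβ1, rfl⟩
        refine (hd.diff hxs).mono ?_
        rintro n ⟨⟨hnβ, hnsucc⟩, hn2⟩
        exact ⟨hnβ, fun hnδ => hn2 ⟨hnδ, hnsucc⟩⟩

lemma G_mono (hAinf : ∀ α, (A α).Infinite)
    (hA2 : ∀ α, ∃ γ, (A γ \ A α).Infinite)
    (ξ : Cardinal) (hp : ξ ≤ pNum) {γ δ : Ordinal} (hle : γ ≤ δ) (hδ : δ < ξ.ord)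
    (f : Ordinal → Ordinal) : AlmostSub (G A δ f) (G A γ f) := by
  rcases hle.lt_or_eq with h | rfl
  · exact ((G_inv A hAinf hA2 ξ hp δ hδ f).2 γ h).1
  · exact almostSub_of_subset subset_rfl
lemma inter_finite_of_almostSub {a b X Y : Set ℕ} (ha : AlmostSub a X)
    (hb : AlmostSub b Y) (hXY : (X ∩ Y).Finite) : (a ∩ b).Finite := by
  have hsub : a ∩ b ⊆ (a \ X) ∪ (b \ Y) ∪ (X ∩ Y) := by
    intro n hn
    by_cases h1 : n ∈ X
    · by_cases h2 : n ∈ Y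
      · exact Or.inr ⟨h1, h2⟩
      · exact Or.inl (Or.inr ⟨hn.2, h2⟩)
    · exact Or.inl (Or.inl ⟨hn.1, h1⟩)
  exact ((ha.union hb).union hXY).subset hsub

lemma pNum_le_continuum : pNum ≤ 2 ^ ℵ₀ := by
  classical
  set B : Set (Set ℕ) := {a | a ∈ Filter.hyperfilter ℕ} with hB
  have hsfip : ∀ s : Finset (Set ℕ), ↑s ⊆ B → (⋂ a ∈ s, a).Infinite := by
    intro s hs
    have hmem : (⋂ a ∈ s, a) ∈ Filter.hyperfilter ℕ :=
      (Filter.biInter_finset_mem s).mpr fun a ha => hs ha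
    intro hfin
    exact Filter.notMem_hyperfilter_of_finite hfin hmem
  have hnopi : ¬ ∃ x : Set ℕ, x.Infinite ∧ ∀ a ∈ B, AlmostSub x a := by
    rintro ⟨x, hx, hsub⟩
    set e : ℕ ↪ ↥x := Set.Infinite.natEmbedding x hx with he
    set S : Set ℕ := Set.range fun n => (e (2 * n) : ℕ) with hS
    set T : Set ℕ := Set.range fun n => (e (2 * n + 1) : ℕ) with hT
    have hSinf : S.Infinite := by
      apply Set.infinite_range_of_injective
      intro n m h
      have := e.injective (Subtype.ext h)
      omega
    have hTinf : T.Infinite := by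
      apply Set.infinite_range_of_injective
      intro n m h
      have := e.injective (Subtype.ext h)
      omega
    have hST : S ∩ T = ∅ := by
      ext n
      simp only [Set.mem_inter_iff, Set.mem_empty_iff_false, iff_false]
      rintro ⟨⟨k, hk⟩, ⟨l, hl⟩⟩
      rw [← hl] at hk
      have := e.injective (Subtype.ext hk)
      omega
    have hSx : S ⊆ x := by rintro _ ⟨k, rfl⟩; exact (e (2 * k)).2
    have hTx : T ⊆ x := by rintro _ ⟨k, rfl⟩; exact (e (2 * k + 1)).2
    have hSmem : S ∈ Filter.hyperfilter ℕ := by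
      rcases (Filter.hyperfilter ℕ).mem_or_compl_mem S with h | h
      · exact h
      · exfalso
        have := hsub Sᶜ h
        have hxS : x \ Sᶜ = S := by
          ext n
          simp only [Set.mem_diff, Set.mem_compl_iff, not_not]
          exact ⟨fun h => h.2, fun h => ⟨hSx h, h⟩⟩
        rw [AlmostSub, hxS] at this
        exact hSinf this
    have hTmem : T ∈ Filter.hyperfilter ℕ := by
      rcases (Filter.hyperfilter ℕ).mem_or_compl_mem T with h | h
      · exact h
      · exfalso
        have := hsub Tᶜ h
        have hxT : x \ Tᶜ = T := by
          ext n
          simp only [Set.mem_diff, Set.mem_compl_iff, not_not]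
          exact ⟨fun h => h.2, fun h => ⟨hTx h, h⟩⟩
        rw [AlmostSub, hxT] at this
        exact hTinf this
    have : (S ∩ T : Set ℕ) ∈ Filter.hyperfilter ℕ := Filter.inter_mem hSmem hTmem
    rw [hST] at this
    exact (Filter.empty_notMem _) this
  have h1 : pNum ≤ #B := csInf_le' ⟨B, rfl, hsfip, hnopi⟩
  have h2 : #B ≤ #(Set ℕ) := Cardinal.mk_set_le B
  have h3 : #(Set ℕ) = 2 ^ ℵ₀ := by
    rw [Cardinal.mk_set, Cardinal.mk_nat]
  exact h1.trans (h2.trans_eq h3)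
lemma exists_A (ξ : Cardinal.{0}) (hunc : ℵ₀ < ξ) (hcont : ξ ≤ 2 ^ ℵ₀) :
    ∃ A : Ordinal → Set ℕ, (∀ α, (A α).Infinite) ∧
      (∀ α, ∃ γ, (A γ \ A α).Infinite) ∧
      (∀ α β, α < ξ.ord → β < ξ.ord → α ≠ β → (A α ∩ A β).Finite) := by
  classical
  obtain ⟨emb⟩ : Nonempty (ξ.ord.ToType ↪ (ℕ → Bool)) := by
    rw [← Cardinal.le_def]
    have h1 : #(ξ.ord.ToType) = ξ := by rw [Cardinal.mk_toType, Cardinal.card_ord]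
    have h2 : #(ℕ → Bool) = 2 ^ ℵ₀ := by
      rw [← Cardinal.power_def, Cardinal.mk_bool, Cardinal.mk_nat]
    rw [h1, h2]
    exact hcont
  have h1ord : (1 : Ordinal) < ξ.ord := by
    rw [Cardinal.lt_ord]
    simpa using Cardinal.one_lt_aleph0.trans hunc
  have h0ord : (0 : Ordinal) < ξ.ord := zero_lt_one.trans h1ord
  set xIdx : Ordinal → (ℕ → Bool) := fun α =>
    if h : α < ξ.ord then emb (Ordinal.ToType.mk (o := ξ.ord) ⟨α, h⟩)
    else (fun _ => false) with hxIdx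
  have hxinj : ∀ α β, α < ξ.ord → β < ξ.ord → α ≠ β → xIdx α ≠ xIdx β := by
    intro α β hα hβ hne heq
    rw [hxIdx] at heq
    simp only [dif_pos hα, dif_pos hβ] at heq
    have h2 := (Ordinal.ToType.mk (o := ξ.ord)).injective (emb.injective heq)
    exact hne (congrArg Subtype.val h2)
  refine ⟨fun α => Aset (xIdx α), fun α => Aset_infinite _, ?_, ?_⟩
  · intro α
    have h01 : xIdx 0 ≠ xIdx 1 := hxinj 0 1 h0ord h1ord zero_ne_one
    by_cases h : xIdx α = xIdx 0
    · exact ⟨1, Aset_diff_infinite (by rw [h]; exact h01.symm)⟩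
    · exact ⟨0, Aset_diff_infinite (Ne.symm h)⟩
  · intro α β hα hβ hne
    exact Aset_inter_finite (hxinj α β hα hβ hne)

end Stmt17

/-- If 𝔭 ≥ ξ (ξ regular uncountable), there is an embedding of the tree
`(ξ^{<ξ}, ⊊)` into `([ω]^{ℵ₀}, ⊋*)` preserving strict order and
incompatibility. -/
theorem stmt17 (ξ : Cardinal) (hreg : ξ.IsRegular) (hunc : ℵ₀ < ξ)
    (hp : ξ ≤ pNum) :
    ∃ F : XSeq ξ → Set ℕ,
      (∀ s, (F s).Infinite) ∧
      (∀ s t, seqExt s t → s.len < t.len →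
        AlmostSub (F t) (F s) ∧ ¬ AlmostSub (F s) (F t)) ∧
      (∀ s t, ¬ seqExt s t → ¬ seqExt t s → (F s ∩ F t).Finite) := by
  classical
  obtain ⟨A, hAinf, hA2, hAD⟩ :=
    Stmt17.exists_A ξ hunc (hp.trans Stmt17.pNum_le_continuum)
  refine ⟨fun s => Stmt17.G A s.len s.f, ?_, ?_, ?_⟩
  · intro s
    exact (Stmt17.G_inv A hAinf hA2 ξ hp s.len s.len_lt s.f).1
  · intro s t hst hlt
    have hcong : Stmt17.G A s.len t.f = Stmt17.G A s.len s.f :=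
      Stmt17.G_congr A s.len t.f s.f hst.2
    have hinv := (Stmt17.G_inv A hAinf hA2 ξ hp t.len t.len_lt t.f).2 s.len hlt
    constructor
    · have h := hinv.1
      rwa [hcong] at h
    · have h := hinv.2
      rw [hcong] at h
      exact fun hh => h hh
  · have key : ∀ s t : XSeq ξ, s.len ≤ t.len → ¬ seqExt s t →
        (Stmt17.G A s.len s.f ∩ Stmt17.G A t.len t.f).Finite := by
      intro s t hlen hnext
      have hex : ∃ β, β < s.len ∧ s.f β ≠ t.f β := by
        by_contra hno
        push_neg at hno
        exact hnext ⟨hlen, fun β hβ => (hno β hβ).symm⟩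
      obtain ⟨β₀, hβ₀S, hmin⟩ := wellFounded_lt.has_min
        {β : Ordinal | β < s.len ∧ s.f β ≠ t.f β} ⟨hex.choose, hex.choose_spec⟩
      obtain ⟨hβ₀s, hne⟩ := hβ₀S
      have hβ₀t : β₀ < t.len := lt_of_lt_of_le hβ₀s hlen
      have hagree : ∀ γ < β₀, s.f γ = t.f γ := by
        intro γ hγ
        by_contra hne'
        exact hmin γ ⟨hγ.trans hβ₀s, hne'⟩ hγ
      have hGbase : Stmt17.G A β₀ s.f = Stmt17.G A β₀ t.f :=
        Stmt17.G_congr A β₀ s.f t.f hagree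
      have hbaseinf : (Stmt17.G A β₀ s.f).Infinite :=
        (Stmt17.G_inv A hAinf hA2 ξ hp β₀ (hβ₀s.trans s.len_lt) s.f).1
      have hXY : (Stmt17.G A (Order.succ β₀) s.f ∩
          Stmt17.G A (Order.succ β₀) t.f).Finite := by
        rw [Stmt17.G_succ, Stmt17.G_succ, ← hGbase,
          ← Set.image_inter (Stmt17.enumF_inj hbaseinf)]
        exact (hAD _ _ (s.f_lt β₀ hβ₀s) (t.f_lt β₀ hβ₀t) hne).image _
      exact Stmt17.inter_finite_of_almostSub
        (Stmt17.G_mono A hAinf hA2 ξ hp (Order.succ_le_of_lt hβ₀s) s.len_lt s.f)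
        (Stmt17.G_mono A hAinf hA2 ξ hp (Order.succ_le_of_lt hβ₀t) t.len_lt t.f)
        hXY
    intro s t hst hts
    rcases le_total s.len t.len with h | h
    · exact key s t h hst
    · rw [Set.inter_comm]
      exact key t s h hts
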